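/- Let $G$ be a finite directed acyclic graph with edge weights $w(e)$ in a commutative ring, and for a path $\pi$ set $w(\pi)=\prod_{e\in\pi}w(e)$. Let $u_1,\dots,u_r$ and $v_1,\dots,v_r$ be vertices such that for all $i<j$ and $i'>j'$, every path from $u_i$ to $v_j$ intersects (shares a vertex with) every path from $u_{i'}$ to $v_{j'}$. Then $\det\big(\sum_{\pi: u_i\to v_j} w(\pi)\big)_{1\le i,j\le r} = \sum_{(\pi_1,\dots,\pi_r)} w(\pi_1)\cdots w(\pi_r)$, where the sum on the right is over $r$-tuples of pairwise vertex-disjoint paths with $\pi_k$ going from $u_k$ to $v_k$. -/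

import Mathlib

open Finset

variable {V : Type*} {R : Type*}

def IsDirPath (adj : V → V → Prop) (u v : V) (p : List V) : Prop :=
  p ≠ [] ∧ p.head? = some u ∧ p.getLast? = some v ∧ p.Chain' adj

def pathWeight [CommRing R] (w : V → V → R) (p : List V) : R :=
  ((p.zip p.tail).map fun e => w e.1 e.2).prod

section helpers

variable {adj : V → V → Prop}

lemma pathWeight_single [CommRing R] (w : V → V → R) (x : V) : pathWeight w [x] = 1 := by
  simp [pathWeight]

lemma pathWeight_cons_cons [CommRing R] (w : V → V → R) (a b : V) (l : List V) :
    pathWeight w (a :: b :: l) = w a b * pathWeight w (b :: l) := by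
  simp [pathWeight]

lemma pathWeight_append [CommRing R] (w : V → V → R) (s t : List V) (x : V) :
    pathWeight w (s ++ x :: t) = pathWeight w (s ++ [x]) * pathWeight w (x :: t) := by
  induction s with
  | nil => simp [pathWeight_single]
  | cons a s ih =>
    cases s with
    | nil => simp [pathWeight_cons_cons, pathWeight_single]
    | cons b s' =>
      simp only [List.cons_append] at *
      rw [pathWeight_cons_cons, ih, pathWeight_cons_cons]
      ring

lemma isDirPath_split_left {a b x : V} {A B : List V}
    (h : IsDirPath adj a b (A ++ x :: B)) : IsDirPath adj a x (A ++ [x]) := by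
  obtain ⟨-, h2, -, h4⟩ := h
  refine ⟨by simp, ?_, by simp, h4.prefix ⟨B, by simp⟩⟩
  cases A <;> simpa using h2

lemma isDirPath_split_right {a b x : V} {A B : List V}
    (h : IsDirPath adj a b (A ++ x :: B)) : IsDirPath adj x b (x :: B) := by
  obtain ⟨-, -, h3, h4⟩ := h
  refine ⟨by simp, by simp, ?_, h4.suffix ⟨A, rfl⟩⟩
  rwa [List.getLast?_append_cons] at h3

lemma isDirPath_glue {a c x : V} {A D : List V}
    (h1 : IsDirPath adj a x (A ++ [x])) (h2 : IsDirPath adj x c (x :: D)) :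
    IsDirPath adj a c (A ++ x :: D) := by
  obtain ⟨-, h12, h13, h14⟩ := h1
  obtain ⟨-, -, h23, h24⟩ := h2
  refine ⟨by simp, ?_, ?_, ?_⟩
  · cases A <;> simpa using h12
  · rwa [List.getLast?_append_cons]
  · have : A ++ x :: D = (A ++ [x]) ++ D := by simp
    rw [this]
    show List.IsChain adj _
    rw [List.isChain_append]
    refine ⟨h14, h24.tail, ?_⟩
    intro p hp q hq
    rw [List.getLast?_concat] at hp
    obtain rfl : x = p := by simpa using hp
    rcases D with - | ⟨d, D⟩
    · simp at hq
    · obtain rfl : d = q := by simpa using hq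
      exact (List.isChain_cons_cons.mp h24).1

lemma exists_first {Q : V → Prop} {l : List V} (h : ∃ z ∈ l, Q z) :
    ∃ A x B, l = A ++ x :: B ∧ Q x ∧ ∀ a ∈ A, ¬ Q a := by
  induction l with
  | nil => simp at h
  | cons a l ih =>
    by_cases ha : Q a
    · exact ⟨[], a, l, rfl, ha, by simp⟩
    · obtain ⟨z, hz, hQ⟩ := h
      have hz' : z ∈ l := by
        rcases List.mem_cons.mp hz with rfl | h'
        · exact absurd hQ ha
        · exact h'
      obtain ⟨A, x, B, h1, h2, h3⟩ := ih ⟨z, hz', hQ⟩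
      refine ⟨a :: A, x, B, by simp [h1], h2, ?_⟩
      rintro b hb
      rcases List.mem_cons.mp hb with rfl | hb'
      · exact ha
      · exact h3 b hb'

lemma first_unique {Q : V → Prop} : ∀ {A : List V} {x : V} {B A' : List V} {x' : V} {B' : List V},
    A ++ x :: B = A' ++ x' :: B' → Q x → Q x' → (∀ a ∈ A, ¬ Q a) → (∀ a ∈ A', ¬ Q a) →
    A = A' ∧ x = x' ∧ B = B' := by
  intro A
  induction A with
  | nil =>
    intro x B A' x' B' h hx hx' _ hA'
    cases A' with
    | nil =>
      simp only [List.nil_append, List.cons.injEq] at h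
      exact ⟨rfl, h.1, h.2⟩
    | cons a A'' =>
      simp only [List.nil_append, List.cons_append, List.cons.injEq] at h
      exact absurd (h.1 ▸ hx) (hA' a (by simp))
  | cons a A ih =>
    intro x B A' x' B' h hx hx' hA hA'
    cases A' with
    | nil =>
      simp only [List.cons_append, List.nil_append, List.cons.injEq] at h
      exact absurd (h.1 ▸ hx') (hA a (by simp))
    | cons a' A'' =>
      simp only [List.cons_append, List.cons.injEq] at h
      obtain ⟨rfl, h2⟩ := h
      obtain ⟨e1, e2, e3⟩ := ih h2 hx hx' (fun b hb => hA b (by simp [hb]))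
        (fun b hb => hA' b (by simp [hb]))
      exact ⟨by rw [e1], e2, e3⟩

lemma IsDirPath.nodup (hacyc : ∀ v p, IsDirPath adj v v p → p.length ≤ 1)
    {a b : V} {p : List V} (h : IsDirPath adj a b p) : p.Nodup := by
  classical
  by_contra hnd
  rw [List.nodup_iff_count_le_one] at hnd
  push_neg at hnd
  obtain ⟨z, hz⟩ := hnd
  have hmem : z ∈ p := by
    rw [← List.count_pos_iff]; omega
  obtain ⟨A, x, B, hAB, hx, hA⟩ := exists_first (Q := fun y => y = z) ⟨z, hmem, rfl⟩
  subst hx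
  have hcount : List.count x B ≥ 1 := by
    have := hz
    rw [hAB, List.count_append, List.count_cons_self] at this
    have hA0 : List.count x A = 0 := by
      rw [List.count_eq_zero]
      intro hmemA
      exact hA x hmemA rfl
    omega
  have hmemB : x ∈ B := by rw [← List.count_pos_iff]; omega
  obtain ⟨A₂, y, B₂, hB, hy, -⟩ := exists_first (Q := fun w => w = x) ⟨x, hmemB, rfl⟩
  subst hy
  set m : List V := (y :: A₂) ++ [y] with hm
  have hinfix : m <:+: p := ⟨A, B₂, by simp [hAB, hB, hm]⟩
  have hpath : IsDirPath adj y y m := by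
    refine ⟨by simp [hm], by simp [hm], ?_, h.2.2.2.infix hinfix⟩
    show m.getLast? = some y
    rw [hm, List.getLast?_concat]
  have := hacyc y m hpath
  simp [hm] at this

lemma finite_dirPaths [Finite V] (hacyc : ∀ v p, IsDirPath adj v v p → p.length ≤ 1)
    (a b : V) : {p : List V | IsDirPath adj a b p}.Finite := by
  cases nonempty_fintype V
  refine (List.finite_length_le V (Fintype.card V)).subset ?_
  intro p hp
  exact (IsDirPath.nodup hacyc hp).length_le_card

end helpers

lemma perm_eq_one_of_forall_le {r : ℕ} (σ : Equiv.Perm (Fin r)) (h : ∀ k, k ≤ σ k) : σ = 1 := by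
  classical
  by_contra hne
  set S : Finset (Fin r) := Finset.univ.filter (fun k => σ k ≠ k) with hSdef
  have hS : S.Nonempty := by
    by_contra h'
    rw [Finset.not_nonempty_iff_eq_empty, hSdef, Finset.filter_eq_empty_iff] at h'
    apply hne
    ext k
    have := not_not.mp (h' (Finset.mem_univ k))
    exact congrArg Fin.val this
  set m := S.max' hS with hmdef
  have hm : σ m ≠ m := by
    have h0 : m ∈ Finset.univ.filter (fun k => σ k ≠ k) := S.max'_mem hS
    exact (Finset.mem_filter.mp h0).2
  have h1 : m < σ m := lt_of_le_of_ne (h m) (Ne.symm hm)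
  have h2 : σ (σ m) = σ m := by
    by_contra h2
    have hmem : σ m ∈ S := Finset.mem_filter.mpr ⟨Finset.mem_univ _, h2⟩
    have : σ m ≤ m := S.le_max' _ hmem
    exact absurd this (not_le.mpr h1)
  exact hm (σ.injective h2)

lemma perm_descent_ascent {r : ℕ} (σ : Equiv.Perm (Fin r)) (hne : σ ≠ 1) :
    (∃ k, k < σ k) ∧ (∃ k, σ k < k) := by
  constructor
  · by_contra h
    push_neg at h
    have h' : ∀ k, k ≤ σ⁻¹ k := by
      intro k
      have := h (σ⁻¹ k)
      simpa using this
    exact hne (by simpa using perm_eq_one_of_forall_le σ⁻¹ h')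
  · by_contra h
    push_neg at h
    have h' : ∀ k, k ≤ σ k := by
      intro k
      have hk := h k
      exact hk
    exact hne (perm_eq_one_of_forall_le σ h')

section swap

open scoped Classical

noncomputable def firstSplit (Q : V → Prop) : List V → List V × List V
  | [] => ([], [])
  | a :: l => if Q a then ([], a :: l) else ((firstSplit Q l).1.cons a, (firstSplit Q l).2)

lemma firstSplit_eq {Q : V → Prop} {A B : List V} {x : V} (hA : ∀ a ∈ A, ¬ Q a) (hx : Q x) :
    firstSplit Q (A ++ x :: B) = (A, x :: B) := by
  induction A with
  | nil => simp [firstSplit, hx]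
  | cons a A ih =>
    have ha : ¬ Q a := hA a (by simp)
    have ih' := ih (fun b hb => hA b (by simp [hb]))
    simp [firstSplit, ha, ih']

variable {r : ℕ}

noncomputable def lgvSwap3 (σ : Equiv.Perm (Fin r)) (π : Fin r → List V)
    (i : Fin r) (A : List V) (x : V) (B : List V) (j : Fin r) :
    Equiv.Perm (Fin r) × (Fin r → List V) :=
  match (firstSplit (fun z => z = x) (π j)).1, (firstSplit (fun z => z = x) (π j)).2 with
  | _, [] => (σ, π)
  | C, _ :: D =>
      (σ * Equiv.swap i j,
       Function.update (Function.update π i (A ++ x :: D)) j (C ++ x :: B))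

noncomputable def lgvSwap2 (σ : Equiv.Perm (Fin r)) (π : Fin r → List V) (i : Fin r) :
    Equiv.Perm (Fin r) × (Fin r → List V) :=
  match (firstSplit (fun z => ∃ j, j ≠ i ∧ z ∈ π j) (π i)).1,
        (firstSplit (fun z => ∃ j, j ≠ i ∧ z ∈ π j) (π i)).2 with
  | _, [] => (σ, π)
  | A, x :: B =>
    if hJ : (Finset.univ.filter fun j => j ≠ i ∧ x ∈ π j).Nonempty then
      lgvSwap3 σ π i A x B (Finset.min' _ hJ)
    else (σ, π)

noncomputable def lgvSwap (σ : Equiv.Perm (Fin r)) (π : Fin r → List V) :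
    Equiv.Perm (Fin r) × (Fin r → List V) :=
  if hT : (Finset.univ.filter fun i => ∃ j, j ≠ i ∧ ∃ z, z ∈ π i ∧ z ∈ π j).Nonempty then
    lgvSwap2 σ π (Finset.min' _ hT)
  else (σ, π)

lemma lgvSwap_eq (σ : Equiv.Perm (Fin r)) (π : Fin r → List V)
    (hT : (Finset.univ.filter fun i => ∃ j, j ≠ i ∧ ∃ z, z ∈ π i ∧ z ∈ π j).Nonempty) :
    lgvSwap σ π = lgvSwap2 σ π (Finset.min' _ hT) := by
  rw [lgvSwap, dif_pos hT]

lemma lgvSwap2_eq (σ : Equiv.Perm (Fin r)) (π : Fin r → List V) (i : Fin r)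
    {A : List V} {x : V} {B : List V}
    (h : firstSplit (fun z => ∃ j, j ≠ i ∧ z ∈ π j) (π i) = (A, x :: B))
    (hJ : (Finset.univ.filter fun j => j ≠ i ∧ x ∈ π j).Nonempty) :
    lgvSwap2 σ π i = lgvSwap3 σ π i A x B (Finset.min' _ hJ) := by
  rw [lgvSwap2, h]
  simp [hJ]

lemma lgvSwap3_eq (σ : Equiv.Perm (Fin r)) (π : Fin r → List V) (i : Fin r)
    (A : List V) (x : V) (B : List V) (j : Fin r) {C D : List V} {y : V}
    (h : firstSplit (fun z => z = x) (π j) = (C, y :: D)) :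
    lgvSwap3 σ π i A x B j =
      (σ * Equiv.swap i j,
       Function.update (Function.update π i (A ++ x :: D)) j (C ++ x :: B)) := by
  rw [lgvSwap3, h]

end swap

section spec

open scoped Classical

variable {R : Type*} [CommRing R] {adj : V → V → Prop} {w : V → V → R}
variable {r : ℕ} {u v : Fin r → V}

lemma lgvSwap_spec (hacyc : ∀ x p, IsDirPath adj x x p → p.length ≤ 1)
    (σ : Equiv.Perm (Fin r)) (π : Fin r → List V)
    (hdp : ∀ k, IsDirPath adj (u k) (v (σ k)) (π k))
    (hnd : ¬ ∀ k l, k ≠ l → ∀ z, z ∈ π k → z ∉ π l) :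
    (∀ k, IsDirPath adj (u k) (v ((lgvSwap σ π).1 k)) ((lgvSwap σ π).2 k)) ∧
    (¬ ∀ k l, k ≠ l → ∀ z, z ∈ (lgvSwap σ π).2 k → z ∉ (lgvSwap σ π).2 l) ∧
    (lgvSwap σ π).1 ≠ σ ∧
    Equiv.Perm.sign (lgvSwap σ π).1 = - Equiv.Perm.sign σ ∧
    ((∏ k, pathWeight w ((lgvSwap σ π).2 k)) = ∏ k, pathWeight w (π k)) ∧
    lgvSwap (lgvSwap σ π).1 (lgvSwap σ π).2 = (σ, π) := by
  have hnodup : ∀ k, (π k).Nodup := fun k => (hdp k).nodup hacyc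
  have hT : (Finset.univ.filter fun i => ∃ j, j ≠ i ∧ ∃ z, z ∈ π i ∧ z ∈ π j).Nonempty := by
    push_neg at hnd
    obtain ⟨k, l, hkl, z, hzk, hzl⟩ := hnd
    exact ⟨k, Finset.mem_filter.mpr ⟨Finset.mem_univ _, l, hkl.symm, z, hzk, hzl⟩⟩
  set i : Fin r := Finset.min' _ hT with hidef
  have hiT : ∃ j, j ≠ i ∧ ∃ z, z ∈ π i ∧ z ∈ π j :=
    (Finset.mem_filter.mp (Finset.min'_mem _ hT)).2
  obtain ⟨j₁, hj₁, z₁, hz₁i, hz₁j⟩ := hiT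
  obtain ⟨A, x, B, hsplit, hQx, hA⟩ :=
    exists_first (Q := fun z => ∃ j, j ≠ i ∧ z ∈ π j) ⟨z₁, hz₁i, j₁, hj₁, hz₁j⟩
  have hfs1 : firstSplit (fun z => ∃ j, j ≠ i ∧ z ∈ π j) (π i) = (A, x :: B) := by
    rw [hsplit]; exact firstSplit_eq hA hQx
  have hJ : (Finset.univ.filter fun j => j ≠ i ∧ x ∈ π j).Nonempty := by
    obtain ⟨j₂, hj₂, hxj₂⟩ := hQx
    exact ⟨j₂, Finset.mem_filter.mpr ⟨Finset.mem_univ _, hj₂, hxj₂⟩⟩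
  set j : Fin r := Finset.min' _ hJ with hjdef
  have hjJ : j ≠ i ∧ x ∈ π j := (Finset.mem_filter.mp (Finset.min'_mem _ hJ)).2
  obtain ⟨hji, hxj⟩ := hjJ
  have hxi : x ∈ π i := by rw [hsplit]; simp
  have hij : i < j := by
    refine lt_of_le_of_ne ?_ (Ne.symm hji)
    exact Finset.min'_le _ _ (Finset.mem_filter.mpr ⟨Finset.mem_univ _, i, Ne.symm hji, x, hxj, hxi⟩)
  obtain ⟨C, x', D, hsplitj, hx', hC⟩ :=
    exists_first (Q := fun z => z = x) ⟨x, hxj, rfl⟩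
  rw [hx'] at hsplitj
  clear hx'
  have hfs2 : firstSplit (fun z => z = x) (π j) = (C, x :: D) := by
    rw [hsplitj]; exact firstSplit_eq hC rfl
  -- the swapped data
  set σ' : Equiv.Perm (Fin r) := σ * Equiv.swap i j with hσ'
  set π' : Fin r → List V :=
    Function.update (Function.update π i (A ++ x :: D)) j (C ++ x :: B) with hπ'
  have e1 : lgvSwap σ π = lgvSwap2 σ π i := lgvSwap_eq σ π hT
  have e2 : lgvSwap2 σ π i = lgvSwap3 σ π i A x B j := lgvSwap2_eq σ π i hfs1 hJ
  have e3 : lgvSwap3 σ π i A x B j = (σ', π') := lgvSwap3_eq σ π i A x B j hfs2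
  have hswap : lgvSwap σ π = (σ', π') := by rw [e1, e2, e3]
  -- values of π'
  have hπ'i : π' i = A ++ x :: D := by
    rw [hπ', Function.update_apply, if_neg hij.ne, Function.update_self]
  have hπ'j : π' j = C ++ x :: B := by
    rw [hπ', Function.update_self]
  have hπ'k : ∀ k, k ≠ i → k ≠ j → π' k = π k := fun k hki hkj => by
    rw [hπ', Function.update_apply, if_neg hkj, Function.update_apply, if_neg hki]
  -- values of σ'
  have hσ'i : σ' i = σ j := by
    rw [hσ', Equiv.Perm.mul_apply, Equiv.swap_apply_left]
  have hσ'j : σ' j = σ i := by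
    rw [hσ', Equiv.Perm.mul_apply, Equiv.swap_apply_right]
  have hσ'k : ∀ k, k ≠ i → k ≠ j → σ' k = σ k := fun k hki hkj => by
    rw [hσ', Equiv.Perm.mul_apply, Equiv.swap_apply_of_ne_of_ne hki hkj]
  -- path pieces
  have hpi := hdp i
  rw [hsplit] at hpi
  have hpj := hdp j
  rw [hsplitj] at hpj
  have hleft1 := isDirPath_split_left hpi
  have hright1 := isDirPath_split_right hpi
  have hleft2 := isDirPath_split_left hpj
  have hright2 := isDirPath_split_right hpj
  -- goal 1 : validity
  have hvalid : ∀ k, IsDirPath adj (u k) (v (σ' k)) (π' k) := by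
    intro k
    rcases eq_or_ne k i with rfl | hki
    · rw [hπ'i, hσ'i]; exact isDirPath_glue hleft1 hright2
    rcases eq_or_ne k j with rfl | hkj
    · rw [hπ'j, hσ'j]; exact isDirPath_glue hleft2 hright1
    · rw [hπ'k k hki hkj, hσ'k k hki hkj]; exact hdp k
  have hxπ'i : x ∈ π' i := by rw [hπ'i]; simp
  have hxπ'j : x ∈ π' j := by rw [hπ'j]; simp
  -- goal 2 : still not disjoint
  have hnd' : ¬ ∀ k l, k ≠ l → ∀ z, z ∈ π' k → z ∉ π' l := by
    intro hfor
    exact hfor i j hij.ne x hxπ'i hxπ'j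
  -- goal 3
  have hσ'ne : σ' ≠ σ := by
    intro he
    have h0 : σ' i = σ i := by rw [he]
    rw [hσ'i] at h0
    exact hji (σ.injective h0)
  -- goal 4
  have hsign : Equiv.Perm.sign σ' = - Equiv.Perm.sign σ := by
    rw [hσ', Equiv.Perm.sign_mul, Equiv.Perm.sign_swap hij.ne, mul_neg_one]
  -- goal 5
  have e4 : ∀ (f : Fin r → List V), ∏ k, pathWeight w (f k) =
      pathWeight w (f i) * (pathWeight w (f j) *
        ∏ k ∈ (Finset.univ.erase i).erase j, pathWeight w (f k)) := by
    intro f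
    rw [← Finset.mul_prod_erase Finset.univ _ (Finset.mem_univ i),
      ← Finset.mul_prod_erase (Finset.univ.erase i) _
        (Finset.mem_erase.mpr ⟨hji, Finset.mem_univ j⟩)]
  have hprod : ∏ k, pathWeight w (π' k) = ∏ k, pathWeight w (π k) := by
    rw [e4 π', e4 π, hπ'i, hπ'j]
    have hrest : ∏ k ∈ (Finset.univ.erase i).erase j, pathWeight w (π' k) =
        ∏ k ∈ (Finset.univ.erase i).erase j, pathWeight w (π k) := by
      refine Finset.prod_congr rfl (fun k hk => ?_)
      have hkj := (Finset.mem_erase.mp hk).1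
      have hki := (Finset.mem_erase.mp (Finset.mem_erase.mp hk).2).1
      rw [hπ'k k hki hkj]
    rw [hrest, hsplit, hsplitj, pathWeight_append w A D x, pathWeight_append w C B x,
      pathWeight_append w A B x, pathWeight_append w C D x]
    ring
  -- nodup consequences
  have hnodAB : (A ++ x :: B).Nodup := hsplit ▸ hnodup i
  have hdisjAB : A.Disjoint (x :: B) := (List.nodup_append'.mp hnodAB).2.2
  -- goal 6 : involution
  have hT' : (Finset.univ.filter fun k => ∃ l, l ≠ k ∧ ∃ z, z ∈ π' k ∧ z ∈ π' l).Nonempty :=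
    ⟨i, Finset.mem_filter.mpr ⟨Finset.mem_univ _, j, hji, x, hxπ'i, hxπ'j⟩⟩
  have hmini : (Finset.univ.filter fun k => ∃ l, l ≠ k ∧ ∃ z, z ∈ π' k ∧ z ∈ π' l).min' hT' = i := by
    apply le_antisymm
    · exact Finset.min'_le _ _
        (Finset.mem_filter.mpr ⟨Finset.mem_univ _, j, hji, x, hxπ'i, hxπ'j⟩)
    · by_contra hlt
      push_neg at hlt
      set k := (Finset.univ.filter fun k => ∃ l, l ≠ k ∧ ∃ z, z ∈ π' k ∧ z ∈ π' l).min' hT'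
        with hkdef
      have hk : ∃ l, l ≠ k ∧ ∃ z, z ∈ π' k ∧ z ∈ π' l :=
        (Finset.mem_filter.mp (Finset.min'_mem _ hT')).2
      have hki : k ≠ i := ne_of_lt hlt
      have hkj : k ≠ j := ne_of_lt (lt_trans hlt hij)
      obtain ⟨l, hlk, z, hzk, hzl⟩ := hk
      rw [hπ'k k hki hkj] at hzk
      have hex : ∃ l'', l'' ≠ k ∧ z ∈ π l'' := by
        rcases eq_or_ne l i with rfl | hli
        · rw [hπ'i] at hzl
          rcases List.mem_append.mp hzl with h | h
          · exact ⟨i, Ne.symm hki, by rw [hsplit]; exact List.mem_append_left _ h⟩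
          · rcases List.mem_cons.mp h with rfl | h
            · exact ⟨i, Ne.symm hki, hxi⟩
            · exact ⟨j, Ne.symm hkj, by rw [hsplitj]; simp [h]⟩
        rcases eq_or_ne l j with rfl | hlj
        · rw [hπ'j] at hzl
          rcases List.mem_append.mp hzl with h | h
          · exact ⟨j, Ne.symm hkj, by rw [hsplitj]; exact List.mem_append_left _ h⟩
          · rcases List.mem_cons.mp h with rfl | h
            · exact ⟨j, Ne.symm hkj, hxj⟩
            · exact ⟨i, Ne.symm hki, by rw [hsplit]; simp [h]⟩
        · exact ⟨l, hlk, by rwa [hπ'k l hli hlj] at hzl⟩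
      obtain ⟨l'', hl''k, hzl''⟩ := hex
      have hkT : k ∈ Finset.univ.filter fun i => ∃ j, j ≠ i ∧ ∃ z, z ∈ π i ∧ z ∈ π j :=
        Finset.mem_filter.mpr ⟨Finset.mem_univ _, l'', hl''k, z, hzk, hzl''⟩
      have h2 : i ≤ k := Finset.min'_le _ _ hkT
      exact absurd hlt (not_lt.mpr h2)
  have hQ'x : ∃ l, l ≠ i ∧ x ∈ π' l := ⟨j, hji, hxπ'j⟩
  have hA' : ∀ a ∈ A, ¬ ∃ l, l ≠ i ∧ a ∈ π' l := by
    rintro a ha ⟨l, hli, hal⟩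
    have hnQ := hA a ha
    rcases eq_or_ne l j with rfl | hlj
    · rw [hπ'j] at hal
      rcases List.mem_append.mp hal with h | h
      · exact hnQ ⟨j, hji, by rw [hsplitj]; exact List.mem_append_left _ h⟩
      · rcases List.mem_cons.mp h with rfl | h
        · exact hnQ ⟨j, hji, hxj⟩
        · exact hdisjAB ha (List.mem_cons_of_mem _ h)
    · exact hnQ ⟨l, hli, by rwa [hπ'k l hli hlj] at hal⟩
  have hfs1' : firstSplit (fun z => ∃ l, l ≠ i ∧ z ∈ π' l) (π' i) = (A, x :: D) := by
    rw [hπ'i]; exact firstSplit_eq hA' hQ'x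
  have hJ' : (Finset.univ.filter fun l => l ≠ i ∧ x ∈ π' l).Nonempty :=
    ⟨j, Finset.mem_filter.mpr ⟨Finset.mem_univ _, hji, hxπ'j⟩⟩
  have hminj : (Finset.univ.filter fun l => l ≠ i ∧ x ∈ π' l).min' hJ' = j := by
    apply le_antisymm
    · exact Finset.min'_le _ _ (Finset.mem_filter.mpr ⟨Finset.mem_univ _, hji, hxπ'j⟩)
    · set k := (Finset.univ.filter fun l => l ≠ i ∧ x ∈ π' l).min' hJ' with hkdef
      have hk : k ≠ i ∧ x ∈ π' k := (Finset.mem_filter.mp (Finset.min'_mem _ hJ')).2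
      rcases eq_or_ne k j with hkj | hkj
      · exact le_of_eq hkj.symm
      · obtain ⟨hki, hxk⟩ := hk
        rw [hπ'k k hki hkj] at hxk
        have hkJ : k ∈ Finset.univ.filter fun l => l ≠ i ∧ x ∈ π l :=
          Finset.mem_filter.mpr ⟨Finset.mem_univ _, hki, hxk⟩
        exact Finset.min'_le _ _ hkJ
  have hfs2' : firstSplit (fun z => z = x) (π' j) = (C, x :: B) := by
    rw [hπ'j]; exact firstSplit_eq hC rfl
  have e1' : lgvSwap σ' π' = lgvSwap2 σ' π' i := by
    have h0 := lgvSwap_eq σ' π' hT'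
    rwa [hmini] at h0
  have e2' : lgvSwap2 σ' π' i = lgvSwap3 σ' π' i A x D j := by
    have h0 := lgvSwap2_eq σ' π' i hfs1' hJ'
    rwa [hminj] at h0
  have e3' : lgvSwap3 σ' π' i A x D j =
      (σ' * Equiv.swap i j,
       Function.update (Function.update π' i (A ++ x :: B)) j (C ++ x :: D)) :=
    lgvSwap3_eq σ' π' i A x D j hfs2'
  have hback1 : σ' * Equiv.swap i j = σ := by
    rw [hσ', mul_assoc, Equiv.swap_mul_self, mul_one]
  have hback2 : Function.update (Function.update π' i (A ++ x :: B)) j (C ++ x :: D) = π := by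
    funext k
    rcases eq_or_ne k j with rfl | hkj
    · rw [Function.update_self, hsplitj]
    rcases eq_or_ne k i with rfl | hki
    · rw [Function.update_apply, if_neg hkj, Function.update_self, hsplit]
    · rw [Function.update_apply, if_neg hkj, Function.update_apply, if_neg hki,
        hπ'k k hki hkj]
  have hinv : lgvSwap (lgvSwap σ π).1 (lgvSwap σ π).2 = (σ, π) := by
    rw [hswap]
    show lgvSwap σ' π' = (σ, π)
    rw [e1', e2', e3', hback1, hback2]
  rw [hswap]
  exact ⟨hvalid, hnd', hσ'ne, hsign, hprod, by rw [← hswap]; exact hinv⟩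

end spec

theorem lindstrom_gessel_viennot [Fintype V] [CommRing R]
    (adj : V → V → Prop) (w : V → V → R)
    -- acyclicity: every directed path from a vertex back to itself is trivial
    (hacyc : ∀ v p, IsDirPath adj v v p → p.length ≤ 1)
    (r : ℕ) (u v : Fin r → V)
    -- crossing paths intersect
    (hcross : ∀ i j i' j' : Fin r, i < j → j' < i' →
      ∀ p q, IsDirPath adj (u i) (v j) p → IsDirPath adj (u i') (v j') q →
        ∃ z, z ∈ p ∧ z ∈ q) :
    Matrix.det (Matrix.of fun i j : Fin r =>
        finsum fun p : {p : List V // IsDirPath adj (u i) (v j) p} =>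
          pathWeight w p.1) =
      finsum fun π : {π : Fin r → List V //
          (∀ k, IsDirPath adj (u k) (v k) (π k)) ∧
          (∀ k l, k ≠ l → ∀ z, z ∈ π k → z ∉ π l)} =>
        ∏ k : Fin r, pathWeight w (π.1 k) := by
  classical
  have hfin : ∀ a b : V, {p : List V | IsDirPath adj a b p}.Finite :=
    fun a b => finite_dirPaths hacyc a b
  have hentry : ∀ a b : V,
      (finsum fun p : {p : List V // IsDirPath adj a b p} => pathWeight w p.1) =
        ∑ p ∈ (hfin a b).toFinset, pathWeight w p := by
    intro a b
    rw [finsum_subtype_eq_finsum_cond]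
    exact finsum_mem_eq_finite_toFinset_sum _ (hfin a b)
  -- the RHS as a Finset sum
  have hS : {π : Fin r → List V | (∀ k, IsDirPath adj (u k) (v k) (π k)) ∧
      (∀ k l, k ≠ l → ∀ z, z ∈ π k → z ∉ π l)}.Finite := by
    refine Set.Finite.subset
      (Fintype.piFinset fun k => (hfin (u k) (v k)).toFinset).finite_toSet ?_
    intro π hπ
    simp only [Finset.coe_sort_coe, Finset.mem_coe, Fintype.mem_piFinset,
      Set.Finite.mem_toFinset]
    exact fun k => hπ.1 k
  have hRHS : (finsum fun π : {π : Fin r → List V //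
          (∀ k, IsDirPath adj (u k) (v k) (π k)) ∧
          (∀ k l, k ≠ l → ∀ z, z ∈ π k → z ∉ π l)} =>
        ∏ k : Fin r, pathWeight w (π.1 k)) =
      ∑ π ∈ hS.toFinset, ∏ k : Fin r, pathWeight w (π k) := by
    have h1 : (finsum fun π : {π : Fin r → List V //
          (∀ k, IsDirPath adj (u k) (v k) (π k)) ∧
          (∀ k l, k ≠ l → ∀ z, z ∈ π k → z ∉ π l)} =>
        ∏ k : Fin r, pathWeight w (π.1 k)) =
        ∑ᶠ (g : Fin r → List V) (_ : (∀ k, IsDirPath adj (u k) (v k) (g k)) ∧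
          (∀ k l, k ≠ l → ∀ z, z ∈ g k → z ∉ g l)), ∏ k : Fin r, pathWeight w (g k) :=
      finsum_subtype_eq_finsum_cond (f := fun g : Fin r → List V => ∏ k : Fin r, pathWeight w (g k)) _
    rw [h1]
    exact finsum_mem_eq_finite_toFinset_sum _ hS
  rw [hRHS]
  -- the LHS as a sum over a sigma type
  set M := Matrix.of (fun i j : Fin r =>
      finsum fun p : {p : List V // IsDirPath adj (u i) (v j) p} => pathWeight w p.1)
    with hM
  set s : Finset (Σ _ : Equiv.Perm (Fin r), Fin r → List V) :=
    (Finset.univ : Finset (Equiv.Perm (Fin r))).sigma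
      (fun σ => Fintype.piFinset fun i => (hfin (u i) (v (σ i))).toFinset) with hs
  have hmem : ∀ a : (Σ _ : Equiv.Perm (Fin r), Fin r → List V),
      a ∈ s ↔ ∀ k, IsDirPath adj (u k) (v (a.1 k)) (a.2 k) := by
    intro a
    rw [hs, Finset.mem_sigma]
    simp [Fintype.mem_piFinset, Set.Finite.mem_toFinset]
  have hL : M.det = ∑ a ∈ s,
      ((Equiv.Perm.sign a.1 : ℤ) : R) * ∏ i, pathWeight w (a.2 i) := by
    rw [← Matrix.det_transpose, Matrix.det_apply']
    rw [hs, Finset.sum_sigma]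
    refine Finset.sum_congr rfl fun σ _ => ?_
    have h1 : ∏ i, M.transpose (σ i) i = ∏ i, M i (σ i) :=
      Finset.prod_congr rfl fun i _ => rfl
    have h2 : ∏ i, M i (σ i) =
        ∑ π ∈ Fintype.piFinset (fun i => (hfin (u i) (v (σ i))).toFinset),
          ∏ i, pathWeight w (π i) := by
      have h3 : ∀ i : Fin r, M i (σ i) = ∑ p ∈ (hfin (u i) (v (σ i))).toFinset,
          pathWeight w p := fun i => hentry _ _
      rw [Finset.prod_congr rfl fun i _ => h3 i]
      exact Finset.prod_univ_sum _ _
    rw [h1, h2, Finset.mul_sum]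
  rw [hL]
  -- split into disjoint and non-disjoint families
  set Good : (Σ _ : Equiv.Perm (Fin r), Fin r → List V) → Prop :=
    fun a => ∀ k l, k ≠ l → ∀ z, z ∈ a.2 k → z ∉ a.2 l with hGood
  rw [← Finset.sum_filter_add_sum_filter_not s Good
    (fun a => ((Equiv.Perm.sign a.1 : ℤ) : R) * ∏ i, pathWeight w (a.2 i))]
  -- the non-disjoint part vanishes
  have hzero : ∑ a ∈ s.filter (fun a => ¬ Good a),
      ((Equiv.Perm.sign a.1 : ℤ) : R) * ∏ i, pathWeight w (a.2 i) = 0 := by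
    refine Finset.sum_involution
      (fun a _ => ⟨(lgvSwap a.1 a.2).1, (lgvSwap a.1 a.2).2⟩) ?_ ?_ ?_ ?_
    · intro a ha
      obtain ⟨has, hnd⟩ := Finset.mem_filter.mp ha
      obtain ⟨hv, hnd', -, hsg, hpr, -⟩ :=
        lgvSwap_spec (w := w) hacyc a.1 a.2 ((hmem a).mp has) hnd
      have hsg' : ((Equiv.Perm.sign (lgvSwap a.1 a.2).1 : ℤ) : R) =
          - ((Equiv.Perm.sign a.1 : ℤ) : R) := by
        rw [hsg]; push_cast; ring
      rw [hsg', hpr]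
      ring
    · intro a ha _
      obtain ⟨has, hnd⟩ := Finset.mem_filter.mp ha
      obtain ⟨-, -, hne, -⟩ := lgvSwap_spec (w := w) hacyc a.1 a.2 ((hmem a).mp has) hnd
      intro hcontra
      exact hne (congrArg Sigma.fst hcontra)
    · intro a ha
      obtain ⟨has, hnd⟩ := Finset.mem_filter.mp ha
      obtain ⟨hv, hnd', -⟩ := lgvSwap_spec (w := w) hacyc a.1 a.2 ((hmem a).mp has) hnd
      refine Finset.mem_filter.mpr ⟨(hmem _).mpr hv, hnd'⟩
    · intro a ha
      obtain ⟨has, hnd⟩ := Finset.mem_filter.mp ha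
      obtain ⟨-, -, -, -, -, hinv⟩ :=
        lgvSwap_spec (w := w) hacyc a.1 a.2 ((hmem a).mp has) hnd
      show (⟨(lgvSwap (lgvSwap a.1 a.2).1 (lgvSwap a.1 a.2).2).1,
        (lgvSwap (lgvSwap a.1 a.2).1 (lgvSwap a.1 a.2).2).2⟩ :
          Σ _ : Equiv.Perm (Fin r), Fin r → List V) = a
      rw [hinv]
  rw [hzero, add_zero]
  -- the disjoint part
  refine Finset.sum_bij' (fun a _ => a.2) (fun π _ => ⟨1, π⟩) ?_ ?_ ?_ ?_ ?_
  · intro a ha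
    obtain ⟨has, hgood⟩ := Finset.mem_filter.mp ha
    have hdp := (hmem a).mp has
    have ha1 : a.1 = 1 := by
      by_contra hne
      obtain ⟨⟨k, hk⟩, ⟨k', hk'⟩⟩ := perm_descent_ascent a.1 hne
      have hkk' : k ≠ k' := by
        intro h
        subst h
        exact absurd (lt_trans hk hk') (lt_irrefl _)
      obtain ⟨z, hz1, hz2⟩ := hcross k (a.1 k) k' (a.1 k') hk hk' (a.2 k) (a.2 k')
        (hdp k) (hdp k')
      exact hgood k k' hkk' z hz1 hz2
    rw [Set.Finite.mem_toFinset]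
    refine ⟨fun k => ?_, hgood⟩
    have := hdp k
    rwa [ha1, Equiv.Perm.one_apply] at this
  · intro π hπ
    rw [Set.Finite.mem_toFinset] at hπ
    refine Finset.mem_filter.mpr ⟨(hmem _).mpr fun k => ?_, hπ.2⟩
    simpa using hπ.1 k
  · intro a ha
    obtain ⟨has, hgood⟩ := Finset.mem_filter.mp ha
    have hdp := (hmem a).mp has
    have ha1 : a.1 = 1 := by
      by_contra hne
      obtain ⟨⟨k, hk⟩, ⟨k', hk'⟩⟩ := perm_descent_ascent a.1 hne
      have hkk' : k ≠ k' := by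
        intro h
        subst h
        exact absurd (lt_trans hk hk') (lt_irrefl _)
      obtain ⟨z, hz1, hz2⟩ := hcross k (a.1 k) k' (a.1 k') hk hk' (a.2 k) (a.2 k')
        (hdp k) (hdp k')
      exact hgood k k' hkk' z hz1 hz2
    obtain ⟨σa, πa⟩ := a
    simp only at ha1
    show (⟨1, πa⟩ : Σ _ : Equiv.Perm (Fin r), Fin r → List V) = ⟨σa, πa⟩
    subst ha1
    rfl
  · intro π hπ
    rfl
  · intro a ha
    obtain ⟨has, hgood⟩ := Finset.mem_filter.mp ha
    have hdp := (hmem a).mp has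
    have ha1 : a.1 = 1 := by
      by_contra hne
      obtain ⟨⟨k, hk⟩, ⟨k', hk'⟩⟩ := perm_descent_ascent a.1 hne
      have hkk' : k ≠ k' := by
        intro h
        subst h
        exact absurd (lt_trans hk hk') (lt_irrefl _)
      obtain ⟨z, hz1, hz2⟩ := hcross k (a.1 k) k' (a.1 k') hk hk' (a.2 k) (a.2 k')
        (hdp k) (hdp k')
      exact hgood k k' hkk' z hz1 hz2
    rw [ha1]
    simp
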